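/- arXiv:1612.04437 — 5 statements merged into one kernel-verified Lean document; each statement's English description precedes it below -/
import Mathlib

section
/- Let g be a nondegenerate symmetric bilinear form of Lorentzian signature (-,+,+,+) on ℝ⁴. If w : ℝ⁴ × ℝ⁴ → ℝ is a bilinear form such that w(ξ, ξ) = 0 for every ξ ∈ ℝ⁴ with g(ξ, ξ) = 0, then there exists a constant c ∈ ℝ and an antisymmetric bilinear form A (i.e. A(ξ, η) = -A(η, ξ)) such that w(ξ, η) = c·g(ξ, η) + A(ξ, η) for all ξ, η ∈ ℝ⁴. -/
open Matrix

/-- The Minkowski matrix diag(-1,1,1,1). -/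
noncomputable def minkMat : Matrix (Fin 4) (Fin 4) ℝ :=
  Matrix.diagonal (fun i => if i = 0 then (-1 : ℝ) else 1)

private lemma conj_quad (M P : Matrix (Fin 4) (Fin 4) ℝ) (ξ : Fin 4 → ℝ) :
    ξ ⬝ᵥ (Pᵀ * M * P) *ᵥ ξ = (P *ᵥ ξ) ⬝ᵥ M *ᵥ (P *ᵥ ξ) := by
  rw [← Matrix.mulVec_mulVec, ← Matrix.mulVec_mulVec, Matrix.dotProduct_mulVec,
    Matrix.vecMul_transpose]

private lemma quad_transpose (M : Matrix (Fin 4) (Fin 4) ℝ) (x : Fin 4 → ℝ) :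
    x ⬝ᵥ Mᵀ *ᵥ x = x ⬝ᵥ M *ᵥ x := by
  rw [Matrix.dotProduct_mulVec, Matrix.vecMul_transpose, dotProduct_comm]

private lemma mink_explicit :
    minkMat = !![(-1:ℝ),0,0,0; 0,1,0,0; 0,0,1,0; 0,0,0,1] := by
  ext i j
  fin_cases i <;> fin_cases j <;>
    simp [minkMat, Matrix.diagonal_apply, Matrix.vecHead, Matrix.vecTail]

/-- A bilinear form on ℝ⁴ vanishing on the null cone of a Lorentzian
metric g decomposes as c·g plus an antisymmetric form. -/
theorem null_form_decomposition (G W : Matrix (Fin 4) (Fin 4) ℝ)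
    (hGsym : G.IsSymm)
    (hGsig : ∃ P : Matrix (Fin 4) (Fin 4) ℝ, IsUnit P.det ∧ Pᵀ * G * P = minkMat)
    (hnull : ∀ ξ : Fin 4 → ℝ, ξ ⬝ᵥ G *ᵥ ξ = 0 → ξ ⬝ᵥ W *ᵥ ξ = 0) :
    ∃ (c : ℝ) (A : Matrix (Fin 4) (Fin 4) ℝ), Aᵀ = -A ∧ W = c • G + A := by
  obtain ⟨P, hPdet, hP⟩ := hGsig
  letI : Invertible P := P.invertibleOfIsUnitDet hPdet
  letI : Invertible Pᵀ := Pᵀ.invertibleOfIsUnitDet (by rwa [Matrix.det_transpose])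
  set S : Matrix (Fin 4) (Fin 4) ℝ := Pᵀ * (W + Wᵀ) * P with hS
  have hSsym : ∀ i j, S i j = S j i := by
    intro i j
    have h : Sᵀ = S := by
      rw [hS, Matrix.transpose_mul, Matrix.transpose_mul, Matrix.transpose_add,
        Matrix.transpose_transpose, Matrix.transpose_transpose, Matrix.mul_assoc, add_comm Wᵀ]
    exact congrFun (congrFun h j) i
  have hnull' : ∀ ξ : Fin 4 → ℝ, ξ ⬝ᵥ minkMat *ᵥ ξ = 0 → ξ ⬝ᵥ S *ᵥ ξ = 0 := by
    intro ξ hξ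
    rw [← hP, conj_quad] at hξ
    have h2 := hnull _ hξ
    rw [hS, conj_quad, Matrix.add_mulVec, dotProduct_add, quad_transpose, h2]
    norm_num
  have expand : ∀ ξ : Fin 4 → ℝ, ξ ⬝ᵥ S *ᵥ ξ =
      ξ 0 * (S 0 0 * ξ 0 + S 0 1 * ξ 1 + S 0 2 * ξ 2 + S 0 3 * ξ 3) +
      ξ 1 * (S 1 0 * ξ 0 + S 1 1 * ξ 1 + S 1 2 * ξ 2 + S 1 3 * ξ 3) +
      ξ 2 * (S 2 0 * ξ 0 + S 2 1 * ξ 1 + S 2 2 * ξ 2 + S 2 3 * ξ 3) +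
      ξ 3 * (S 3 0 * ξ 0 + S 3 1 * ξ 1 + S 3 2 * ξ 2 + S 3 3 * ξ 3) := by
    intro ξ
    simp [dotProduct, Matrix.mulVec, Fin.sum_univ_four]
  have mquad : ∀ ξ : Fin 4 → ℝ, ξ ⬝ᵥ minkMat *ᵥ ξ =
      -(ξ 0 * ξ 0) + ξ 1 * ξ 1 + ξ 2 * ξ 2 + ξ 3 * ξ 3 := by
    intro ξ
    rw [mink_explicit]
    simp [dotProduct, Matrix.mulVec, Fin.sum_univ_four, Matrix.vecHead, Matrix.vecTail]
  have mknull : ∀ ξ : Fin 4 → ℝ,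
      -(ξ 0 * ξ 0) + ξ 1 * ξ 1 + ξ 2 * ξ 2 + ξ 3 * ξ 3 = 0 → ξ ⬝ᵥ minkMat *ᵥ ξ = 0 := by
    intro ξ h
    rw [mquad]; exact h
  have E1 := hnull' ![1,1,0,0] (mknull _ (by norm_num [Matrix.cons_val_two, Matrix.cons_val_three]))
  have E2 := hnull' ![1,-1,0,0] (mknull _ (by norm_num [Matrix.cons_val_two, Matrix.cons_val_three]))
  have E3 := hnull' ![1,0,1,0] (mknull _ (by norm_num [Matrix.cons_val_two, Matrix.cons_val_three]))
  have E4 := hnull' ![1,0,-1,0] (mknull _ (by norm_num [Matrix.cons_val_two, Matrix.cons_val_three]))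
  have E5 := hnull' ![1,0,0,1] (mknull _ (by norm_num [Matrix.cons_val_two, Matrix.cons_val_three]))
  have E6 := hnull' ![1,0,0,-1] (mknull _ (by norm_num [Matrix.cons_val_two, Matrix.cons_val_three]))
  have E7 := hnull' ![5,3,4,0] (mknull _ (by norm_num [Matrix.cons_val_two, Matrix.cons_val_three]))
  have E8 := hnull' ![5,3,0,4] (mknull _ (by norm_num [Matrix.cons_val_two, Matrix.cons_val_three]))
  have E9 := hnull' ![5,0,3,4] (mknull _ (by norm_num [Matrix.cons_val_two, Matrix.cons_val_three]))
  rw [expand] at E1 E2 E3 E4 E5 E6 E7 E8 E9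
  norm_num [Matrix.cons_val_two, Matrix.cons_val_three] at E1 E2 E3 E4 E5 E6 E7 E8 E9
  have h01 := hSsym 0 1; have h02 := hSsym 0 2; have h03 := hSsym 0 3
  have h12 := hSsym 1 2; have h13 := hSsym 1 3; have h23 := hSsym 2 3
  obtain ⟨c', hSc⟩ : ∃ c' : ℝ, S = c' • minkMat := by
    refine ⟨S 1 1, ?_⟩
    rw [mink_explicit]
    ext i j
    fin_cases i <;> fin_cases j <;>
      simp [Matrix.smul_apply, Matrix.vecHead, Matrix.vecTail, Matrix.cons_val_two, Matrix.cons_val_three] <;>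
      linarith
  have key : ∀ X : Matrix (Fin 4) (Fin 4) ℝ, ⅟(Pᵀ) * (Pᵀ * X * P) * ⅟P = X := by
    intro X
    calc ⅟(Pᵀ) * (Pᵀ * X * P) * ⅟P = (⅟(Pᵀ) * Pᵀ) * X * (P * ⅟P) := by
          noncomm_ring
      _ = X := by rw [invOf_mul_self, mul_invOf_self, Matrix.one_mul, Matrix.mul_one]
  have hsum : W + Wᵀ = c' • G := by
    have h : Pᵀ * (W + Wᵀ) * P = Pᵀ * (c' • G) * P := by
      rw [← hS, hSc, ← hP, Matrix.mul_smul, Matrix.smul_mul]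
    have h2 := congrArg (fun M => ⅟(Pᵀ) * M * ⅟P) h
    simpa only [key] using h2
  refine ⟨c' / 2, W - (c' / 2) • G, ?_, by abel⟩
  have hWt : Wᵀ = c' • G - W := by
    rw [← hsum]; abel
  rw [Matrix.transpose_sub, Matrix.transpose_smul, hGsym.eq, hWt]
  ext i j
  simp [Matrix.sub_apply, Matrix.smul_apply, Matrix.neg_apply]
  ring
end

section
/- Let g be a nondegenerate symmetric bilinear form of Lorentzian signature (-,+,+,+) on ℝ⁴. If w is a symmetric bilinear form on ℝ⁴ with w(ξ, ξ) = 0 for every null vector ξ (i.e. every ξ with g(ξ, ξ) = 0), then w = c·g for some constant c ∈ ℝ. -/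
open Matrix

lemma mink_case_aux (W : Matrix (Fin 4) (Fin 4) ℝ) (hs : W.IsSymm)
    (h : ∀ ξ : Fin 4 → ℝ, ξ ⬝ᵥ minkMat *ᵥ ξ = 0 → ξ ⬝ᵥ W *ᵥ ξ = 0) :
    W = (W 1 1) • minkMat := by
  have sym : ∀ i j, W j i = W i j := fun i j => congrFun (congrFun hs i) j
  set t := Real.sqrt 2 with ht
  have ht2 : t * t = 2 := Real.mul_self_sqrt (by norm_num)
  have n1 := h ![1,1,0,0] (by simp [minkMat, dotProduct, mulVec, Matrix.diagonal, Fin.sum_univ_four])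
  have n1' := h ![1,-1,0,0] (by simp [minkMat, dotProduct, mulVec, Matrix.diagonal, Fin.sum_univ_four])
  have n2 := h ![1,0,1,0] (by simp [minkMat, dotProduct, mulVec, Matrix.diagonal, Fin.sum_univ_four])
  have n2' := h ![1,0,-1,0] (by simp [minkMat, dotProduct, mulVec, Matrix.diagonal, Fin.sum_univ_four])
  have n3 := h ![1,0,0,1] (by simp [minkMat, dotProduct, mulVec, Matrix.diagonal, Fin.sum_univ_four])
  have n3' := h ![1,0,0,-1] (by simp [minkMat, dotProduct, mulVec, Matrix.diagonal, Fin.sum_univ_four])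
  have m12 := h ![t,1,1,0] (by simp [minkMat, dotProduct, mulVec, Matrix.diagonal, Fin.sum_univ_four]; nlinarith)
  have m13 := h ![t,1,0,1] (by simp [minkMat, dotProduct, mulVec, Matrix.diagonal, Fin.sum_univ_four]; nlinarith)
  have m23 := h ![t,0,1,1] (by simp [minkMat, dotProduct, mulVec, Matrix.diagonal, Fin.sum_univ_four]; nlinarith)
  simp [dotProduct, mulVec, Fin.sum_univ_four] at n1 n1' n2 n2' n3 n3' m12 m13 m23
  have s01 := sym 0 1; have s02 := sym 0 2; have s03 := sym 0 3
  have s12 := sym 1 2; have s13 := sym 1 3; have s23 := sym 2 3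
  have h01 : W 0 1 = 0 := by linarith
  have h02 : W 0 2 = 0 := by linarith
  have h03 : W 0 3 = 0 := by linarith
  have h00 : W 0 0 = - W 1 1 := by linarith
  have h22 : W 2 2 = W 1 1 := by linarith
  have h33 : W 3 3 = W 1 1 := by linarith
  simp only [h01, h02, h03, s01, s02, s03, h00, h22, h33] at m12 m13 m23
  have e : t * (-W 1 1 * t + 0 + 0) = -(t*t) * W 1 1 := by ring
  rw [ht2] at e
  have h12 : W 1 2 = 0 := by linarith [m12, e, s12]
  have h13 : W 1 3 = 0 := by linarith [m13, e, s13]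
  have h23 : W 2 3 = 0 := by linarith [m23, e, s23]
  ext i j
  fin_cases i <;> fin_cases j <;>
    simp [minkMat, Matrix.diagonal] <;> linarith

lemma congr_quad_aux (A B : Matrix (Fin 4) (Fin 4) ℝ) (ξ : Fin 4 → ℝ) :
    ξ ⬝ᵥ (Aᵀ * B * A) *ᵥ ξ = (A *ᵥ ξ) ⬝ᵥ B *ᵥ (A *ᵥ ξ) := by
  rw [← mulVec_mulVec, ← mulVec_mulVec, dotProduct_mulVec, vecMul_transpose]

/-- A symmetric bilinear form on ℝ⁴ vanishing on the light cone of a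
Lorentzian metric g is a constant multiple of g. -/
theorem symmetric_null_form_is_multiple (G W : Matrix (Fin 4) (Fin 4) ℝ)
    (hGsym : G.IsSymm)
    (hGsig : ∃ P : Matrix (Fin 4) (Fin 4) ℝ, IsUnit P.det ∧ Pᵀ * G * P = minkMat)
    (hWsym : W.IsSymm)
    (hnull : ∀ ξ : Fin 4 → ℝ, ξ ⬝ᵥ G *ᵥ ξ = 0 → ξ ⬝ᵥ W *ᵥ ξ = 0) :
    ∃ c : ℝ, W = c • G := by
  obtain ⟨P, hPdet, hP⟩ := hGsig
  have hPinv : Invertible P := P.invertibleOfIsUnitDet hPdet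
  have hPTinv : Invertible Pᵀ := P.invertibleTranspose
  set W' := Pᵀ * W * P with hW'
  have hW'sym : W'.IsSymm := by
    unfold Matrix.IsSymm
    rw [hW', transpose_mul, transpose_mul, transpose_transpose, hWsym.eq, mul_assoc]
  have hW'null : ∀ ξ : Fin 4 → ℝ, ξ ⬝ᵥ minkMat *ᵥ ξ = 0 → ξ ⬝ᵥ W' *ᵥ ξ = 0 := by
    intro ξ hξ
    rw [hW', congr_quad_aux]
    rw [← hP, congr_quad_aux] at hξ
    exact hnull _ hξ
  obtain ⟨c, hkey⟩ : ∃ c : ℝ, W' = c • minkMat := ⟨W' 1 1, mink_case_aux W' hW'sym hW'null⟩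
  refine ⟨c, ?_⟩
  have hWeq : W = ⅟(Pᵀ) * W' * ⅟P := by
    rw [hW', Matrix.mul_assoc (Pᵀ) W P, invOf_mul_cancel_left, mul_invOf_cancel_right]
  rw [hWeq, hkey, ← hP]
  rw [Matrix.mul_smul, Matrix.smul_mul]
  congr 1
  rw [Matrix.mul_assoc (Pᵀ) G P, invOf_mul_cancel_left, mul_invOf_cancel_right]
end

section
/- Let g be a symmetric bilinear form on ℝ⁴, let ζ⁽¹⁾, ζ⁽²⁾, ζ⁽³⁾, ζ⁽⁴⁾ ∈ ℝ⁴ be null vectors such that ζ = ζ⁽¹⁾ + ζ⁽²⁾ + ζ⁽³⁾ + ζ⁽⁴⁾ is also null (g(ζ,ζ)=0), and assume that for each i, g(ζ − ζ⁽ⁱ⁾, ζ − ζ⁽ⁱ⁾) ≠ 0. Then the sum over all 24 permutations (i,j,k,l) of (1,2,3,4) of [ g(ζ⁽ⁱ⁾, ζ⁽ʲ⁾+ζ⁽ᵏ⁾+ζ⁽ˡ⁾) / g(ζ⁽ʲ⁾+ζ⁽ᵏ⁾+ζ⁽ˡ⁾, ζ⁽ʲ⁾+ζ⁽ᵏ⁾+ζ⁽ˡ⁾)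 ] · g(ζ⁽ᵏ⁾, ζ⁽ˡ⁾) equals 4·g(ζ, ζ), which is 0. -/
open Matrix

/-- for four null vectors with null sum ζ and non-degenerate denominators,
Σ_{σ(4)} [g(ζ⁽ⁱ⁾, ζ⁽ʲ⁾+ζ⁽ᵏ⁾+ζ⁽ˡ⁾)/g(ζ⁽ʲ⁾+ζ⁽ᵏ⁾+ζ⁽ˡ⁾,·)]·g(ζ⁽ᵏ⁾,ζ⁽ˡ⁾) = 4·g(ζ,ζ) = 0. -/
theorem first_term_A_vanishes (g : Matrix (Fin 4) (Fin 4) ℝ) (hg : g.IsSymm)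
    (ζ : Fin 4 → (Fin 4 → ℝ)) (hnull : ∀ i, (ζ i) ⬝ᵥ g *ᵥ (ζ i) = 0)
    (hz : (∑ i, ζ i) ⬝ᵥ g *ᵥ (∑ i, ζ i) = 0)
    (hden : ∀ i, ((∑ m, ζ m) - ζ i) ⬝ᵥ g *ᵥ ((∑ m, ζ m) - ζ i) ≠ 0) :
    (∑ σ : Equiv.Perm (Fin 4),
      ((ζ (σ 0)) ⬝ᵥ g *ᵥ (ζ (σ 1) + ζ (σ 2) + ζ (σ 3)) /
        ((ζ (σ 1) + ζ (σ 2) + ζ (σ 3)) ⬝ᵥ g *ᵥ (ζ (σ 1) + ζ (σ 2) + ζ (σ 3)))) *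
        ((ζ (σ 2)) ⬝ᵥ g *ᵥ (ζ (σ 3)))) = 4 * ((∑ i, ζ i) ⬝ᵥ g *ᵥ (∑ i, ζ i)) ∧
    (∑ σ : Equiv.Perm (Fin 4),
      ((ζ (σ 0)) ⬝ᵥ g *ᵥ (ζ (σ 1) + ζ (σ 2) + ζ (σ 3)) /
        ((ζ (σ 1) + ζ (σ 2) + ζ (σ 3)) ⬝ᵥ g *ᵥ (ζ (σ 1) + ζ (σ 2) + ζ (σ 3)))) *
        ((ζ (σ 2)) ⬝ᵥ g *ᵥ (ζ (σ 3)))) = 0 := by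
  classical
  set Z : Fin 4 → ℝ := ∑ i, ζ i with hZdef
  have symm : ∀ x y : Fin 4 → ℝ, x ⬝ᵥ g *ᵥ y = y ⬝ᵥ g *ᵥ x := fun x y => by
    rw [Matrix.dotProduct_mulVec, ← Matrix.mulVec_transpose, hg.eq, dotProduct_comm]
  have expand : ∀ x y : Fin 4 → ℝ, (x + y) ⬝ᵥ g *ᵥ (x + y)
      = x ⬝ᵥ g *ᵥ x + x ⬝ᵥ g *ᵥ y + y ⬝ᵥ g *ᵥ x + y ⬝ᵥ g *ᵥ y := fun x y => by
    simp only [Matrix.mulVec_add, add_dotProduct, dotProduct_add]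
    ring
  have key : ∀ σ : Equiv.Perm (Fin 4),
      (ζ (σ 0)) ⬝ᵥ g *ᵥ (ζ (σ 1) + ζ (σ 2) + ζ (σ 3)) /
        ((ζ (σ 1) + ζ (σ 2) + ζ (σ 3)) ⬝ᵥ g *ᵥ (ζ (σ 1) + ζ (σ 2) + ζ (σ 3))) *
        ((ζ (σ 2)) ⬝ᵥ g *ᵥ (ζ (σ 3)))
      = -(1/2) * ((ζ (σ 2)) ⬝ᵥ g *ᵥ (ζ (σ 3))) := by
    intro σ
    have hsum : ζ (σ 1) + ζ (σ 2) + ζ (σ 3) = Z - ζ (σ 0) := by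
      have h := Equiv.sum_comp σ ζ
      rw [Fin.sum_univ_four] at h
      rw [eq_sub_iff_add_eq, hZdef, ← h]
      abel
    rw [hsum]
    have hE := expand (Z - ζ (σ 0)) (ζ (σ 0))
    rw [sub_add_cancel] at hE
    have hcross := symm (Z - ζ (σ 0)) (ζ (σ 0))
    have h0 := hnull (σ 0)
    have hnum : ζ (σ 0) ⬝ᵥ g *ᵥ (Z - ζ (σ 0))
        = -(1/2) * ((Z - ζ (σ 0)) ⬝ᵥ g *ᵥ (Z - ζ (σ 0))) := by
      linarith
    rw [hnum, mul_div_assoc, div_self (hden (σ 0)), mul_one]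
  have hlinL : ∀ y : Fin 4 → ℝ, Z ⬝ᵥ g *ᵥ y = ∑ i, ζ i ⬝ᵥ g *ᵥ y := by
    intro y
    rw [hZdef]
    simp only [dotProduct, Finset.sum_apply, Finset.sum_mul]
    rw [Finset.sum_comm]
  have hdouble : ∑ i, ∑ j, ζ i ⬝ᵥ g *ᵥ ζ j = 0 := by
    have : ∀ i, ∑ j, ζ i ⬝ᵥ g *ᵥ ζ j = ζ i ⬝ᵥ g *ᵥ Z := by
      intro i
      rw [symm (ζ i) Z, hlinL]
      exact Finset.sum_congr rfl fun j _ => symm (ζ i) (ζ j)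
    rw [Finset.sum_congr rfl fun i _ => this i, ← hlinL Z]
    exact hz
  have hmain : ∑ σ : Equiv.Perm (Fin 4), ζ (σ 2) ⬝ᵥ g *ᵥ ζ (σ 3) = 0 := by
    have h1 : ∑ σ : Equiv.Perm (Fin 4), ζ (σ 2) ⬝ᵥ g *ᵥ ζ (σ 3)
        = ∑ σ : Equiv.Perm (Fin 4),
            (fun p : Fin 4 × Fin 4 => ζ p.1 ⬝ᵥ g *ᵥ ζ p.2) ((fun σ : Equiv.Perm (Fin 4) => (σ 2, σ 3)) σ) := rfl
    have himage : (Finset.univ : Finset (Equiv.Perm (Fin 4))).image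
        (fun σ => (σ 2, σ 3)) = (Finset.univ : Finset (Fin 4)).offDiag := by decide
    have hcard : ∀ p ∈ (Finset.univ : Finset (Fin 4)).offDiag,
        (Finset.univ.filter (fun σ : Equiv.Perm (Fin 4) => (σ 2, σ 3) = p)).card = 2 := by decide
    rw [h1, Finset.sum_comp (fun p : Fin 4 × Fin 4 => ζ p.1 ⬝ᵥ g *ᵥ ζ p.2)
      (fun σ : Equiv.Perm (Fin 4) => (σ 2, σ 3)), himage]
    have h2 : ∑ p ∈ (Finset.univ : Finset (Fin 4)).offDiag,
        (Finset.univ.filter (fun σ : Equiv.Perm (Fin 4) => (σ 2, σ 3) = p)).card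
          • (ζ p.1 ⬝ᵥ g *ᵥ ζ p.2)
        = ∑ p ∈ (Finset.univ : Finset (Fin 4)).offDiag, 2 * (ζ p.1 ⬝ᵥ g *ᵥ ζ p.2) := by
      refine Finset.sum_congr rfl fun p hp => ?_
      rw [hcard p hp]
      simp [two_smul, two_mul]
    rw [h2, ← Finset.mul_sum]
    have hsplit : ∑ p ∈ (Finset.univ : Finset (Fin 4)).diag, (ζ p.1 ⬝ᵥ g *ᵥ ζ p.2)
        + ∑ p ∈ (Finset.univ : Finset (Fin 4)).offDiag, (ζ p.1 ⬝ᵥ g *ᵥ ζ p.2)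
        = ∑ p ∈ (Finset.univ : Finset (Fin 4)) ×ˢ (Finset.univ : Finset (Fin 4)),
            (ζ p.1 ⬝ᵥ g *ᵥ ζ p.2) := by
      rw [← Finset.sum_union (Finset.disjoint_diag_offDiag _), Finset.diag_union_offDiag]
    have hdiag : ∑ p ∈ (Finset.univ : Finset (Fin 4)).diag, (ζ p.1 ⬝ᵥ g *ᵥ ζ p.2) = 0 := by
      rw [Finset.sum_diag]
      exact Finset.sum_eq_zero fun i _ => hnull i
    have hprod : ∑ p ∈ (Finset.univ : Finset (Fin 4)) ×ˢ (Finset.univ : Finset (Fin 4)),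
        (ζ p.1 ⬝ᵥ g *ᵥ ζ p.2) = 0 := by
      rw [Finset.sum_product]
      exact hdouble
    have : ∑ p ∈ (Finset.univ : Finset (Fin 4)).offDiag, (ζ p.1 ⬝ᵥ g *ᵥ ζ p.2) = 0 := by
      linarith [hsplit, hdiag, hprod]
    rw [this, mul_zero]
  have hfinal : (∑ σ : Equiv.Perm (Fin 4),
      ((ζ (σ 0)) ⬝ᵥ g *ᵥ (ζ (σ 1) + ζ (σ 2) + ζ (σ 3)) /
        ((ζ (σ 1) + ζ (σ 2) + ζ (σ 3)) ⬝ᵥ g *ᵥ (ζ (σ 1) + ζ (σ 2) + ζ (σ 3)))) *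
        ((ζ (σ 2)) ⬝ᵥ g *ᵥ (ζ (σ 3)))) = 0 := by
    rw [Finset.sum_congr rfl fun σ _ => key σ, ← Finset.mul_sum, hmain, mul_zero]
  exact ⟨by rw [hfinal, hz, mul_zero], hfinal⟩
end

section
/- Let g be a symmetric bilinear form on ℝ⁴, let ζ⁽¹⁾, ζ⁽²⁾, ζ⁽³⁾, ζ⁽⁴⁾ ∈ ℝ⁴ be null vectors with ζ = ζ⁽¹⁾ + ζ⁽²⁾ + ζ⁽³⁾ + ζ⁽⁴⁾ also null, and assume g(ζ − ζ⁽ⁱ⁾, ζ − ζ⁽ⁱ⁾) ≠ 0 for each i and g(ζ⁽ⁱ⁾ + ζ⁽ʲ⁾, ζ⁽ⁱ⁾ + ζ⁽ʲ⁾) ≠ 0 for each i ≠ j. Then the quantity 𝒜 = Σ_{(i,j,k,l)∈σ(4)} [ 2·g(ζ⁽ⁱ⁾, ζ⁽ʲ⁾+ζ⁽ᵏ⁾+ζ⁽ˡ⁾)·g(ζ⁽ᵏ⁾, ζ⁽ˡ⁾) / g(ζ⁽ʲ⁾+ζ⁽ᵏ⁾+ζ⁽ˡ⁾, ζ⁽ʲ⁾+ζ⁽ᵏ⁾+ζ⁽ˡ⁾)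 + g(ζ⁽ⁱ⁾, ζ⁽ʲ⁾)·g(ζ⁽ᵏ⁾, ζ⁽ˡ⁾) / g(ζ⁽ⁱ⁾+ζ⁽ʲ⁾, ζ⁽ⁱ⁾+ζ⁽ʲ⁾) + 2·g(ζ⁽ᵏ⁾, ζ⁽ˡ⁾)·g(ζ⁽ʲ⁾, ζ⁽ᵏ⁾+ζ⁽ˡ⁾) / g(ζ⁽ᵏ⁾+ζ⁽ˡ⁾, ζ⁽ᵏ⁾+ζ⁽ˡ⁾) ] equals 0. -/
open Matrix

/-- Reindexing lemma: the sum over all permutations of `B (σ a) (σ b)` does not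
depend on the (distinct) positions `a`, `b`; we compare with positions `2`, `3`. -/
lemma sum_perm_pair_aux (B : Fin 4 → Fin 4 → ℝ) (c : Equiv.Perm (Fin 4)) (a b : Fin 4)
    (ha : c 2 = a) (hb : c 3 = b) :
    ∑ σ : Equiv.Perm (Fin 4), B (σ a) (σ b)
      = ∑ σ : Equiv.Perm (Fin 4), B (σ 2) (σ 3) := by
  rw [← Equiv.sum_comp (Equiv.mulRight c) (fun σ : Equiv.Perm (Fin 4) => B (σ 2) (σ 3))]
  refine Finset.sum_congr rfl fun σ _ => ?_
  simp [Equiv.Perm.mul_apply, ha, hb]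

/-- Abstract algebraic form of a single summand. -/
lemma summand_eq_aux (b01 b02 b03 b12 b13 b23 : ℝ)
    (hR : b01+b02+b03+b12+b13+b23 = 0)
    (h3 : 2*(b12+b13+b23) ≠ 0) (h2a : 2*b01 ≠ 0) (h2b : 2*b23 ≠ 0) :
    2*(b01+b02+b03)*b23/(2*(b12+b13+b23)) + b01*b23/(2*b01) + 2*b23*(b12+b13)/(2*b23)
      = -(1/2)*b23 + b12 + b13 := by
  have h3' : b12+b13+b23 ≠ 0 := fun h => h3 (by rw [h]; ring)
  have h2a' : b01 ≠ 0 := fun h => h2a (by rw [h]; ring)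
  have h2b' : b23 ≠ 0 := fun h => h2b (by rw [h]; ring)
  have hA : b01+b02+b03 = -(b12+b13+b23) := by linarith
  rw [hA]
  field_simp
  ring

/-- Abstract combinatorial step: summing the closed forms over all permutations. -/
lemma perm_sum_vanishes_aux (B : Fin 4 → Fin 4 → ℝ)
    (hR : ∀ σ : Equiv.Perm (Fin 4),
      B (σ 0) (σ 1) + B (σ 0) (σ 2) + B (σ 0) (σ 3)
        + B (σ 1) (σ 2) + B (σ 1) (σ 3) + B (σ 2) (σ 3) = 0) :
    ∑ σ : Equiv.Perm (Fin 4),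
      (-(1/2) * B (σ 2) (σ 3) + B (σ 1) (σ 2) + B (σ 1) (σ 3)) = 0 := by
  have h01 := sum_perm_pair_aux B ⟨![2,3,0,1], ![2,3,0,1], by decide, by decide⟩ 0 1
    (by decide) (by decide)
  have h02 := sum_perm_pair_aux B ⟨![1,3,0,2], ![2,0,3,1], by decide, by decide⟩ 0 2
    (by decide) (by decide)
  have h03 := sum_perm_pair_aux B ⟨![1,2,0,3], ![2,0,1,3], by decide, by decide⟩ 0 3
    (by decide) (by decide)
  have h12 := sum_perm_pair_aux B ⟨![0,3,1,2], ![0,2,3,1], by decide, by decide⟩ 1 2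
    (by decide) (by decide)
  have h13 := sum_perm_pair_aux B ⟨![0,2,1,3], ![0,2,1,3], by decide, by decide⟩ 1 3
    (by decide) (by decide)
  have hz : ∑ σ : Equiv.Perm (Fin 4),
      (B (σ 0) (σ 1) + B (σ 0) (σ 2) + B (σ 0) (σ 3)
        + B (σ 1) (σ 2) + B (σ 1) (σ 3) + B (σ 2) (σ 3)) = 0 :=
    Finset.sum_eq_zero fun σ _ => hR σ
  simp only [Finset.sum_add_distrib] at hz
  rw [h01, h02, h03, h12, h13] at hz
  have hT : ∑ σ : Equiv.Perm (Fin 4), B (σ 2) (σ 3) = 0 := by linarith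
  simp only [Finset.sum_add_distrib, neg_mul, Finset.sum_neg_distrib, ← Finset.mul_sum]
  rw [h12, h13, hT]
  ring

/-- vanishing of the principal symbol 𝒜 of the cubic interaction term 𝓜₂. -/
theorem symbol_A_vanishes (g : Matrix (Fin 4) (Fin 4) ℝ) (hg : g.IsSymm)
    (ζ : Fin 4 → (Fin 4 → ℝ)) (hnull : ∀ i, (ζ i) ⬝ᵥ g *ᵥ (ζ i) = 0)
    (hz : (∑ i, ζ i) ⬝ᵥ g *ᵥ (∑ i, ζ i) = 0)
    (hden3 : ∀ i, ((∑ m, ζ m) - ζ i) ⬝ᵥ g *ᵥ ((∑ m, ζ m) - ζ i) ≠ 0)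
    (hden2 : ∀ i j, i ≠ j → (ζ i + ζ j) ⬝ᵥ g *ᵥ (ζ i + ζ j) ≠ 0) :
    ∑ σ : Equiv.Perm (Fin 4),
      (2 * ((ζ (σ 0)) ⬝ᵥ g *ᵥ (ζ (σ 1) + ζ (σ 2) + ζ (σ 3))) *
          ((ζ (σ 2)) ⬝ᵥ g *ᵥ (ζ (σ 3))) /
          ((ζ (σ 1) + ζ (σ 2) + ζ (σ 3)) ⬝ᵥ g *ᵥ (ζ (σ 1) + ζ (σ 2) + ζ (σ 3)))
        + ((ζ (σ 0)) ⬝ᵥ g *ᵥ (ζ (σ 1))) * ((ζ (σ 2)) ⬝ᵥ g *ᵥ (ζ (σ 3))) /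
          ((ζ (σ 0) + ζ (σ 1)) ⬝ᵥ g *ᵥ (ζ (σ 0) + ζ (σ 1)))
        + 2 * ((ζ (σ 2)) ⬝ᵥ g *ᵥ (ζ (σ 3))) *
          ((ζ (σ 1)) ⬝ᵥ g *ᵥ (ζ (σ 2) + ζ (σ 3))) /
          ((ζ (σ 2) + ζ (σ 3)) ⬝ᵥ g *ᵥ (ζ (σ 2) + ζ (σ 3)))) = 0 := by
  -- symmetry of the bilinear form
  have hsym : ∀ x y : Fin 4 → ℝ, x ⬝ᵥ g *ᵥ y = y ⬝ᵥ g *ᵥ x := by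
    intro x y
    rw [Matrix.dotProduct_mulVec]
    nth_rewrite 1 [← hg.eq]
    rw [Matrix.vecMul_transpose, dotProduct_comm]
  -- per-permutation decomposition of the total null vector
  have hsumσ : ∀ σ : Equiv.Perm (Fin 4),
      ∑ m, ζ m = ζ (σ 0) + ζ (σ 1) + ζ (σ 2) + ζ (σ 3) := by
    intro σ
    rw [← Equiv.sum_comp σ ζ, Fin.sum_univ_four]
  -- the relation coming from nullity of the total vector
  have hR : ∀ σ : Equiv.Perm (Fin 4),
      (ζ (σ 0)) ⬝ᵥ g *ᵥ (ζ (σ 1)) + (ζ (σ 0)) ⬝ᵥ g *ᵥ (ζ (σ 2))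
        + (ζ (σ 0)) ⬝ᵥ g *ᵥ (ζ (σ 3)) + (ζ (σ 1)) ⬝ᵥ g *ᵥ (ζ (σ 2))
        + (ζ (σ 1)) ⬝ᵥ g *ᵥ (ζ (σ 3)) + (ζ (σ 2)) ⬝ᵥ g *ᵥ (ζ (σ 3)) = 0 := by
    intro σ
    have h := hz
    rw [hsumσ σ] at h
    simp only [Matrix.mulVec_add, dotProduct_add, add_dotProduct] at h
    have s10 := hsym (ζ (σ 1)) (ζ (σ 0))
    have s20 := hsym (ζ (σ 2)) (ζ (σ 0))
    have s30 := hsym (ζ (σ 3)) (ζ (σ 0))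
    have s21 := hsym (ζ (σ 2)) (ζ (σ 1))
    have s31 := hsym (ζ (σ 3)) (ζ (σ 1))
    have s32 := hsym (ζ (σ 3)) (ζ (σ 2))
    have n0 := hnull (σ 0); have n1 := hnull (σ 1)
    have n2 := hnull (σ 2); have n3 := hnull (σ 3)
    linarith
  -- closed form of every summand
  have key : ∀ σ : Equiv.Perm (Fin 4),
      (2 * ((ζ (σ 0)) ⬝ᵥ g *ᵥ (ζ (σ 1) + ζ (σ 2) + ζ (σ 3))) *
          ((ζ (σ 2)) ⬝ᵥ g *ᵥ (ζ (σ 3))) /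
          ((ζ (σ 1) + ζ (σ 2) + ζ (σ 3)) ⬝ᵥ g *ᵥ (ζ (σ 1) + ζ (σ 2) + ζ (σ 3)))
        + ((ζ (σ 0)) ⬝ᵥ g *ᵥ (ζ (σ 1))) * ((ζ (σ 2)) ⬝ᵥ g *ᵥ (ζ (σ 3))) /
          ((ζ (σ 0) + ζ (σ 1)) ⬝ᵥ g *ᵥ (ζ (σ 0) + ζ (σ 1)))
        + 2 * ((ζ (σ 2)) ⬝ᵥ g *ᵥ (ζ (σ 3))) *
          ((ζ (σ 1)) ⬝ᵥ g *ᵥ (ζ (σ 2) + ζ (σ 3))) /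
          ((ζ (σ 2) + ζ (σ 3)) ⬝ᵥ g *ᵥ (ζ (σ 2) + ζ (σ 3))))
      = -(1/2) * ((ζ (σ 2)) ⬝ᵥ g *ᵥ (ζ (σ 3)))
          + ((ζ (σ 1)) ⬝ᵥ g *ᵥ (ζ (σ 2))) + ((ζ (σ 1)) ⬝ᵥ g *ᵥ (ζ (σ 3))) := by
    intro σ
    -- expansion identities
    have E1 : (ζ (σ 0)) ⬝ᵥ g *ᵥ (ζ (σ 1) + ζ (σ 2) + ζ (σ 3))
        = (ζ (σ 0)) ⬝ᵥ g *ᵥ (ζ (σ 1)) + (ζ (σ 0)) ⬝ᵥ g *ᵥ (ζ (σ 2))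
          + (ζ (σ 0)) ⬝ᵥ g *ᵥ (ζ (σ 3)) := by
      simp only [Matrix.mulVec_add, dotProduct_add]
    have E4 : (ζ (σ 1)) ⬝ᵥ g *ᵥ (ζ (σ 2) + ζ (σ 3))
        = (ζ (σ 1)) ⬝ᵥ g *ᵥ (ζ (σ 2)) + (ζ (σ 1)) ⬝ᵥ g *ᵥ (ζ (σ 3)) := by
      simp only [Matrix.mulVec_add, dotProduct_add]
    have E2 : (ζ (σ 1) + ζ (σ 2) + ζ (σ 3)) ⬝ᵥ g *ᵥ (ζ (σ 1) + ζ (σ 2) + ζ (σ 3))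
        = 2 * ((ζ (σ 1)) ⬝ᵥ g *ᵥ (ζ (σ 2)) + (ζ (σ 1)) ⬝ᵥ g *ᵥ (ζ (σ 3))
            + (ζ (σ 2)) ⬝ᵥ g *ᵥ (ζ (σ 3))) := by
      simp only [Matrix.mulVec_add, dotProduct_add, add_dotProduct]
      have s21 := hsym (ζ (σ 2)) (ζ (σ 1))
      have s31 := hsym (ζ (σ 3)) (ζ (σ 1))
      have s32 := hsym (ζ (σ 3)) (ζ (σ 2))
      have n1 := hnull (σ 1); have n2 := hnull (σ 2); have n3 := hnull (σ 3)
      linarith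
    have E3 : (ζ (σ 0) + ζ (σ 1)) ⬝ᵥ g *ᵥ (ζ (σ 0) + ζ (σ 1))
        = 2 * ((ζ (σ 0)) ⬝ᵥ g *ᵥ (ζ (σ 1))) := by
      simp only [Matrix.mulVec_add, dotProduct_add, add_dotProduct]
      have s10 := hsym (ζ (σ 1)) (ζ (σ 0))
      have n0 := hnull (σ 0); have n1 := hnull (σ 1)
      linarith
    have E5 : (ζ (σ 2) + ζ (σ 3)) ⬝ᵥ g *ᵥ (ζ (σ 2) + ζ (σ 3))
        = 2 * ((ζ (σ 2)) ⬝ᵥ g *ᵥ (ζ (σ 3))) := by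
      simp only [Matrix.mulVec_add, dotProduct_add, add_dotProduct]
      have s32 := hsym (ζ (σ 3)) (ζ (σ 2))
      have n2 := hnull (σ 2); have n3 := hnull (σ 3)
      linarith
    -- nonvanishing of denominators
    have hvec : (∑ m, ζ m) - ζ (σ 0) = ζ (σ 1) + ζ (σ 2) + ζ (σ 3) := by
      rw [hsumσ σ]; abel
    have h3 : 2 * ((ζ (σ 1)) ⬝ᵥ g *ᵥ (ζ (σ 2)) + (ζ (σ 1)) ⬝ᵥ g *ᵥ (ζ (σ 3))
        + (ζ (σ 2)) ⬝ᵥ g *ᵥ (ζ (σ 3))) ≠ 0 := by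
      have h := hden3 (σ 0)
      rw [hvec, E2] at h
      exact h
    have h2a : 2 * ((ζ (σ 0)) ⬝ᵥ g *ᵥ (ζ (σ 1))) ≠ 0 := by
      have h := hden2 (σ 0) (σ 1) (fun h => absurd (σ.injective h) (by decide))
      rw [E3] at h
      exact h
    have h2b : 2 * ((ζ (σ 2)) ⬝ᵥ g *ᵥ (ζ (σ 3))) ≠ 0 := by
      have h := hden2 (σ 2) (σ 3) (fun h => absurd (σ.injective h) (by decide))
      rw [E5] at h
      exact h
    rw [E1, E2, E3, E4, E5]
    exact summand_eq_aux _ _ _ _ _ _ (hR σ) h3 h2a h2b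
  rw [Finset.sum_congr rfl fun σ _ => key σ]
  exact perm_sum_vanishes_aux (fun m n => (ζ m) ⬝ᵥ g *ᵥ (ζ n)) hR
end

section
/- Let g be a symmetric bilinear form on ℝ⁴, let ζ⁽¹⁾, ζ⁽²⁾, ζ⁽³⁾, ζ⁽⁴⁾ ∈ ℝ⁴ be null vectors with ζ = ζ⁽¹⁾ + ζ⁽²⁾ + ζ⁽³⁾ + ζ⁽⁴⁾ also null, and assume g(ζ − ζ⁽ⁱ⁾, ζ − ζ⁽ⁱ⁾) ≠ 0 for each i and g(ζ⁽ⁱ⁾+ζ⁽ʲ⁾, ζ⁽ⁱ⁾+ζ⁽ʲ⁾) ≠ 0 for i ≠ j. Then ℬ = Σ_{(i,j,k,l)∈σ(4)} [ 2·g(ζ⁽ⁱ⁾, ζ⁽ʲ⁾+ζ⁽ᵏ⁾+ζ⁽ˡ⁾)·g(ζ⁽ʲ⁾, ζ⁽ᵏ⁾+ζ⁽ˡ⁾) / g(ζ⁽ʲ⁾+ζ⁽ᵏ⁾+ζ⁽ˡ⁾, ζ⁽ʲ⁾+ζ⁽ᵏ⁾+ζ⁽ˡ⁾) + (1/4)·g(ζ⁽ᵏ⁾+ζ⁽ˡ⁾,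 ζ⁽ⁱ⁾+ζ⁽ʲ⁾) ] equals 0. -/
open Matrix

/-- vanishing of the principal symbol ℬ of the interaction term 𝓜₃. -/
theorem symbol_B_vanishes (g : Matrix (Fin 4) (Fin 4) ℝ) (hg : g.IsSymm)
    (ζ : Fin 4 → (Fin 4 → ℝ)) (hnull : ∀ i, (ζ i) ⬝ᵥ g *ᵥ (ζ i) = 0)
    (hz : (∑ i, ζ i) ⬝ᵥ g *ᵥ (∑ i, ζ i) = 0)
    (hden3 : ∀ i, ((∑ m, ζ m) - ζ i) ⬝ᵥ g *ᵥ ((∑ m, ζ m) - ζ i) ≠ 0)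
    (hden2 : ∀ i j, i ≠ j → (ζ i + ζ j) ⬝ᵥ g *ᵥ (ζ i + ζ j) ≠ 0) :
    ∑ σ : Equiv.Perm (Fin 4),
      (2 * ((ζ (σ 0)) ⬝ᵥ g *ᵥ (ζ (σ 1) + ζ (σ 2) + ζ (σ 3))) *
          ((ζ (σ 1)) ⬝ᵥ g *ᵥ (ζ (σ 2) + ζ (σ 3))) /
          ((ζ (σ 1) + ζ (σ 2) + ζ (σ 3)) ⬝ᵥ g *ᵥ (ζ (σ 1) + ζ (σ 2) + ζ (σ 3)))
        + (1 / 4) * ((ζ (σ 2) + ζ (σ 3)) ⬝ᵥ g *ᵥ (ζ (σ 0) + ζ (σ 1)))) = 0 := by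
  -- notation
  set Z : Fin 4 → ℝ := ∑ m, ζ m with hZ
  have qsymm : ∀ x y : Fin 4 → ℝ, x ⬝ᵥ g *ᵥ y = y ⬝ᵥ g *ᵥ x := by
    intro x y
    rw [Matrix.dotProduct_mulVec, ← Matrix.mulVec_transpose, hg.eq, dotProduct_comm]
  -- step 1 : rewrite each summand
  have hstep : ∀ σ : Equiv.Perm (Fin 4),
      (2 * ((ζ (σ 0)) ⬝ᵥ g *ᵥ (ζ (σ 1) + ζ (σ 2) + ζ (σ 3))) *
          ((ζ (σ 1)) ⬝ᵥ g *ᵥ (ζ (σ 2) + ζ (σ 3))) /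
          ((ζ (σ 1) + ζ (σ 2) + ζ (σ 3)) ⬝ᵥ g *ᵥ (ζ (σ 1) + ζ (σ 2) + ζ (σ 3)))
        + (1 / 4) * ((ζ (σ 2) + ζ (σ 3)) ⬝ᵥ g *ᵥ (ζ (σ 0) + ζ (σ 1))))
      = -(ζ (σ 1) ⬝ᵥ g *ᵥ ζ (σ 2)) - (ζ (σ 1) ⬝ᵥ g *ᵥ ζ (σ 3))
        + (1/4) * ((ζ (σ 2) ⬝ᵥ g *ᵥ ζ (σ 0)) + (ζ (σ 2) ⬝ᵥ g *ᵥ ζ (σ 1))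
          + (ζ (σ 3) ⬝ᵥ g *ᵥ ζ (σ 0)) + (ζ (σ 3) ⬝ᵥ g *ᵥ ζ (σ 1))) := by
    intro σ
    have hsum : ζ (σ 1) + ζ (σ 2) + ζ (σ 3) = Z - ζ (σ 0) := by
      have h := Equiv.sum_comp σ (fun i => ζ i)
      rw [Fin.sum_univ_four] at h
      rw [hZ, ← h]; abel
    set c : ℝ := (ζ (σ 0)) ⬝ᵥ g *ᵥ (Z - ζ (σ 0)) with hc
    have hnum : (ζ (σ 0)) ⬝ᵥ g *ᵥ (ζ (σ 1) + ζ (σ 2) + ζ (σ 3)) = c := by rw [hsum]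
    have hden : (ζ (σ 1) + ζ (σ 2) + ζ (σ 3)) ⬝ᵥ g *ᵥ (ζ (σ 1) + ζ (σ 2) + ζ (σ 3))
        = -(2*c) := by
      rw [hsum, hc]
      have h1 := qsymm Z (ζ (σ 0))
      have h2 := hnull (σ 0)
      simp only [Matrix.mulVec_sub, dotProduct_sub, sub_dotProduct]
      rw [hZ] at *
      linarith [hz]
    have hcne : c ≠ 0 := by
      intro h
      exact hden3 (σ 0) (by rw [← hsum, hden, h]; ring)
    rw [hnum, hden]
    have h1 : 2 * c * ((ζ (σ 1)) ⬝ᵥ g *ᵥ (ζ (σ 2) + ζ (σ 3))) / -(2*c)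
        = -((ζ (σ 1)) ⬝ᵥ g *ᵥ (ζ (σ 2) + ζ (σ 3))) := by
      field_simp
    rw [h1]
    simp only [Matrix.mulVec_add, dotProduct_add, add_dotProduct]
    ring
  rw [Finset.sum_congr rfl (fun σ _ => hstep σ)]
  -- step 2 : the sums  P a b := ∑ σ, Q (σ a) (σ b)  all coincide and vanish
  set P : Fin 4 → Fin 4 → ℝ :=
    fun a b => ∑ σ : Equiv.Perm (Fin 4), (ζ (σ a)) ⬝ᵥ g *ᵥ (ζ (σ b)) with hP
  have hPeq : ∀ (a b : Fin 4) (τ : Equiv.Perm (Fin 4)), τ 0 = a → τ 1 = b →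
      P a b = P 0 1 := by
    intro a b τ h0 h1
    calc P a b = ∑ σ : Equiv.Perm (Fin 4), (ζ ((σ * τ) 0)) ⬝ᵥ g *ᵥ (ζ ((σ * τ) 1)) := by
          simp only [hP]
          exact Finset.sum_congr rfl fun σ _ => by
            rw [Equiv.Perm.mul_apply, Equiv.Perm.mul_apply, h0, h1]
      _ = P 0 1 := by
          simpa using Equiv.sum_comp (Equiv.mulRight τ)
            (fun σ : Equiv.Perm (Fin 4) => (ζ (σ 0)) ⬝ᵥ g *ᵥ (ζ (σ 1)))
  -- P 0 1 = 0
  have hE : ∀ j : Fin 4, (∑ σ : Equiv.Perm (Fin 4), (ζ (σ j)) ⬝ᵥ g *ᵥ Z)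
      = ∑ σ : Equiv.Perm (Fin 4), (ζ (σ 0)) ⬝ᵥ g *ᵥ Z := by
    intro j
    have := Equiv.sum_comp (Equiv.mulRight (Equiv.swap 0 j))
      (fun σ : Equiv.Perm (Fin 4) => (ζ (σ 0)) ⬝ᵥ g *ᵥ Z)
    rw [← this]
    refine Finset.sum_congr rfl fun σ _ => ?_
    simp [Equiv.Perm.mul_apply]
  have hE0 : (∑ σ : Equiv.Perm (Fin 4), (ζ (σ 0)) ⬝ᵥ g *ᵥ Z) = 0 := by
    have h4 : (4 : ℝ) * (∑ σ : Equiv.Perm (Fin 4), (ζ (σ 0)) ⬝ᵥ g *ᵥ Z)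
        = ∑ σ : Equiv.Perm (Fin 4), ∑ j : Fin 4, (ζ (σ j)) ⬝ᵥ g *ᵥ Z := by
      rw [Finset.sum_comm]
      rw [Fin.sum_univ_four, hE 1, hE 2, hE 3]
      ring
    have h5 : ∀ σ : Equiv.Perm (Fin 4), (∑ j : Fin 4, (ζ (σ j)) ⬝ᵥ g *ᵥ Z) = 0 := by
      intro σ
      have : (∑ j : Fin 4, (ζ (σ j)) ⬝ᵥ g *ᵥ Z) = (∑ j : Fin 4, ζ (σ j)) ⬝ᵥ g *ᵥ Z := by
        rw [Fin.sum_univ_four, Fin.sum_univ_four]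
        simp [add_dotProduct]
      rw [this, Equiv.sum_comp σ (fun i => ζ i), ← hZ, hz]
    rw [Finset.sum_congr rfl (fun σ _ => h5 σ)] at h4
    simp at h4
    linarith
  have hP01 : P 0 1 = 0 := by
    have key : P 0 1 + P 0 2 + P 0 3 = 0 := by
      have : ∀ σ : Equiv.Perm (Fin 4),
          (ζ (σ 0)) ⬝ᵥ g *ᵥ ζ (σ 1) + (ζ (σ 0)) ⬝ᵥ g *ᵥ ζ (σ 2)
            + (ζ (σ 0)) ⬝ᵥ g *ᵥ ζ (σ 3) = (ζ (σ 0)) ⬝ᵥ g *ᵥ Z := by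
        intro σ
        have hsum : ζ (σ 1) + ζ (σ 2) + ζ (σ 3) = Z - ζ (σ 0) := by
          have h := Equiv.sum_comp σ (fun i => ζ i)
          rw [Fin.sum_univ_four] at h
          rw [hZ, ← h]; abel
        have expand : (ζ (σ 0)) ⬝ᵥ g *ᵥ (ζ (σ 1) + ζ (σ 2) + ζ (σ 3))
            = (ζ (σ 0)) ⬝ᵥ g *ᵥ ζ (σ 1) + (ζ (σ 0)) ⬝ᵥ g *ᵥ ζ (σ 2)
              + (ζ (σ 0)) ⬝ᵥ g *ᵥ ζ (σ 3) := by
          simp [Matrix.mulVec_add, dotProduct_add]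
        rw [← expand, hsum]
        simp only [Matrix.mulVec_sub, dotProduct_sub]
        rw [hnull (σ 0)]; ring
      have h2 : P 0 2 = ∑ σ : Equiv.Perm (Fin 4), (ζ (σ 0)) ⬝ᵥ g *ᵥ ζ (σ 2) := rfl
      rw [hP]
      rw [← Finset.sum_add_distrib, ← Finset.sum_add_distrib]
      rw [Finset.sum_congr rfl (fun σ _ => this σ), hE0]
    have e2 : P 0 2 = P 0 1 := hPeq 0 2 (Equiv.swap 1 2) (by decide) (by decide)
    have e3 : P 0 3 = P 0 1 := hPeq 0 3 (Equiv.swap 1 3) (by decide) (by decide)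
    rw [e2, e3] at key; linarith
  -- step 3 : assemble
  have expand : (∑ σ : Equiv.Perm (Fin 4),
      (-(ζ (σ 1) ⬝ᵥ g *ᵥ ζ (σ 2)) - (ζ (σ 1) ⬝ᵥ g *ᵥ ζ (σ 3))
        + (1/4) * ((ζ (σ 2) ⬝ᵥ g *ᵥ ζ (σ 0)) + (ζ (σ 2) ⬝ᵥ g *ᵥ ζ (σ 1))
          + (ζ (σ 3) ⬝ᵥ g *ᵥ ζ (σ 0)) + (ζ (σ 3) ⬝ᵥ g *ᵥ ζ (σ 1)))))
      = -(P 1 2) - P 1 3 + (1/4) * (P 2 0 + P 2 1 + P 3 0 + P 3 1) := by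
    simp only [hP]
    simp only [Finset.sum_add_distrib, Finset.sum_sub_distrib, Finset.sum_neg_distrib,
      ← Finset.mul_sum]
  rw [expand,
    hPeq 1 2 (Equiv.swap 0 1 * Equiv.swap 1 2) (by decide) (by decide),
    hPeq 1 3 (Equiv.swap 0 1 * Equiv.swap 1 3) (by decide) (by decide),
    hPeq 2 0 (Equiv.swap 1 2 * Equiv.swap 0 1) (by decide) (by decide),
    hPeq 2 1 (Equiv.swap 0 2) (by decide) (by decide),
    hPeq 3 0 (Equiv.swap 1 3 * Equiv.swap 0 1) (by decide) (by decide),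
    hPeq 3 1 (Equiv.swap 0 3) (by decide) (by decide),
    hP01]
  ring
end
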